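/- arXiv:1910.08953 — 3 statements merged into one kernel-verified Lean document; each statement's English description precedes it below -/
import Mathlib

section
/- For the standard normal CDF Φ, the inequalities (1/2)·(1 + (1 − e^{−x²/2})^{1/2}) ≤ Φ(x) ≤ (1/2)·(1 + (1 − e^{−x²})^{1/2}) hold for all x ≥ 0. -/
open MeasureTheory ProbabilityTheory Real Set Filter

noncomputable def EE (x : ℝ) : ℝ := ∫ t in (0:ℝ)..x, Real.exp (-t^2/2)

lemma contExp : Continuous fun t : ℝ => Real.exp (-t^2/2) := by fun_prop

lemma intExp : Integrable (fun t : ℝ => Real.exp (-t^2/2)) := by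
  have : (fun t : ℝ => Real.exp (-t^2/2)) = fun t : ℝ => Real.exp (-(1/2) * t^2) := by
    ext t; ring_nf
  rw [this]
  exact integrable_exp_neg_mul_sq (by norm_num)

lemma EE_deriv (x : ℝ) : HasDerivAt EE (Real.exp (-x^2/2)) x :=
  intervalIntegral.integral_hasDerivAt_right (intExp.intervalIntegrable)
    (contExp.stronglyMeasurable.stronglyMeasurableAtFilter)
    (contExp.continuousAt)

lemma EE_zero : EE 0 = 0 := intervalIntegral.integral_same

lemma EE_nonneg {x : ℝ} (hx : 0 ≤ x) : 0 ≤ EE x :=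
  intervalIntegral.integral_nonneg hx (fun t _ => (Real.exp_pos _).le)

lemma exp_half_Ioi : ∫ t in Ioi (0:ℝ), Real.exp (-t^2/2) = Real.sqrt (2*π) / 2 := by
  have : (fun t : ℝ => Real.exp (-t^2/2)) = fun t : ℝ => Real.exp (-(1/2) * t^2) := by
    ext t; ring_nf
  rw [this, integral_gaussian_Ioi]
  norm_num
  ring

lemma EE_tendsto : Tendsto EE atTop (nhds (Real.sqrt (2*π) / 2)) := by
  rw [← exp_half_Ioi]
  exact intervalIntegral_tendsto_integral_Ioi 0 intExp.integrableOn tendsto_id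

lemma exp_sq_tendsto : Tendsto (fun x : ℝ => Real.exp (-x^2/2)) atTop (nhds 0) := by
  have h1 : Tendsto (fun x : ℝ => x^2/2) atTop atTop :=
    (tendsto_pow_atTop two_ne_zero).atTop_div_const (by norm_num)
  have h2 := Real.tendsto_exp_neg_atTop_nhds_zero.comp h1
  have heq : ((fun x => Real.exp (-x)) ∘ fun x : ℝ => x^2/2) = fun x : ℝ => Real.exp (-x^2/2) := by
    ext x; simp [Function.comp, neg_div]
  rwa [heq] at h2

lemma exp_sq_tendsto' : Tendsto (fun x : ℝ => Real.exp (-x^2)) atTop (nhds 0) := by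
  have h1 : Tendsto (fun x : ℝ => x^2) atTop atTop := tendsto_pow_atTop two_ne_zero
  have h2 := Real.tendsto_exp_neg_atTop_nhds_zero.comp h1
  have heq : ((fun x => Real.exp (-x)) ∘ fun x : ℝ => x^2) = fun x : ℝ => Real.exp (-x^2) := by
    ext x; simp [Function.comp]
  rwa [heq] at h2

/-- Key abstract lemma: unimodal-derivative-sign argument. -/
lemma key_nonneg {g G h : ℝ → ℝ} {a₀ : ℝ} (ha₀ : 0 ≤ a₀)
    (hg0 : g 0 = 0) (hgt : Tendsto g atTop (nhds 0))
    (hd : ∀ x, HasDerivAt g (G x) x)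
    (hGpos : ∀ x, 0 ≤ h x → 0 ≤ G x) (hGneg : ∀ x, h x ≤ 0 → G x ≤ 0)
    (hh0 : h 0 = 0)
    (hmono : MonotoneOn h (Icc 0 a₀)) (hanti : AntitoneOn h (Ici a₀)) :
    ∀ x, 0 ≤ x → 0 ≤ g x := by
  have hdiff : Differentiable ℝ g := fun x => (hd x).differentiableAt
  have hderiv : ∀ x, deriv g x = G x := fun x => (hd x).deriv
  intro x hx
  by_cases hc : ∀ y ∈ Icc (0:ℝ) x, 0 ≤ h y
  · -- g is monotone on [0, x]
    have hm : MonotoneOn g (Icc 0 x) := by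
      apply monotoneOn_of_deriv_nonneg (convex_Icc _ _) hdiff.continuous.continuousOn
        hdiff.differentiableOn
      intro y hy
      rw [interior_Icc] at hy
      rw [hderiv]
      exact hGpos y (hc y ⟨hy.1.le, hy.2.le⟩)
    have := hm (left_mem_Icc.2 hx) (right_mem_Icc.2 hx) hx
    rwa [hg0] at this
  · push_neg at hc
    obtain ⟨y, hy, hyneg⟩ := hc
    -- y > a₀
    have hya : a₀ < y := by
      by_contra hle
      push_neg at hle
      have := hmono (left_mem_Icc.2 ha₀) ⟨hy.1, hle⟩ hy.1
      rw [hh0] at this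
      exact absurd this (not_le.2 hyneg)
    -- h ≤ 0 on Ici x
    have hneg : ∀ z, x ≤ z → h z ≤ 0 := by
      intro z hz
      have hyz : y ≤ z := le_trans hy.2 hz
      have := hanti (mem_Ici.2 hya.le) (mem_Ici.2 (le_trans hya.le hyz)) hyz
      exact le_trans this hyneg.le
    -- g antitone on Ici x
    have hant : AntitoneOn g (Ici x) := by
      apply antitoneOn_of_deriv_nonpos (convex_Ici _) hdiff.continuous.continuousOn
        hdiff.differentiableOn
      intro z hz
      rw [interior_Ici] at hz
      rw [hderiv]
      exact hGneg z (hneg z hz.le)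
    refine le_of_tendsto hgt ?_
    filter_upwards [eventually_ge_atTop x] with z hz
    exact hant (mem_Ici.2 le_rfl) (mem_Ici.2 hz) hz

lemma pi_lt_four' : (π:ℝ) < 4 := by
  have := Real.pi_lt_d2; linarith

/-- Lower bound: `1 - exp(-x²/2) ≤ (2/π) (EE x)²` for `x ≥ 0`. -/
lemma lower_sq {x : ℝ} (hx : 0 ≤ x) :
    1 - Real.exp (-x^2/2) ≤ 2/π * (EE x)^2 := by
  set g : ℝ → ℝ := fun x => 2/π * (EE x)^2 - (1 - Real.exp (-x^2/2)) with hgdef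
  set G : ℝ → ℝ := fun x => Real.exp (-x^2/2) * (4/π * EE x - x) with hGdef
  set h : ℝ → ℝ := fun x => 4/π * EE x - x with hhdef
  have hπ : (0:ℝ) < π := Real.pi_pos
  have hlog : 0 ≤ Real.log (4/π) :=
    Real.log_nonneg (by rw [le_div_iff₀ hπ]; linarith [pi_lt_four'])
  set a₀ : ℝ := Real.sqrt (2 * Real.log (4/π)) with ha₀def
  have ha₀ : 0 ≤ a₀ := Real.sqrt_nonneg _
  have ha₀sq : a₀^2 = 2 * Real.log (4/π) := Real.sq_sqrt (by linarith)
  have hinner : ∀ y : ℝ, HasDerivAt (fun t : ℝ => -t^2/2) (-y) y := by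
    intro y
    have h1 := ((hasDerivAt_pow 2 y).neg.div_const 2)
    refine h1.congr_deriv ?_
    simp; ring
  have hexp : ∀ y : ℝ, HasDerivAt (fun t : ℝ => Real.exp (-t^2/2))
      (Real.exp (-y^2/2) * (-y)) y := fun y => (hinner y).exp
  have hd : ∀ y, HasDerivAt g (G y) y := by
    intro y
    have h1 : HasDerivAt g (2/π * (2 * EE y ^ 1 * Real.exp (-y^2/2)) -
        (0 - Real.exp (-y^2/2) * (-y))) y :=
      (((EE_deriv y).pow 2).const_mul (2/π)).sub ((hasDerivAt_const y (1:ℝ)).sub (hexp y))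
    convert h1 using 1
    simp only [hGdef]
    ring
  -- h derivative
  have hhd : ∀ y, HasDerivAt h (4/π * Real.exp (-y^2/2) - 1) y := by
    intro y
    have := ((EE_deriv y).const_mul (4/π)).sub (hasDerivAt_id y)
    exact this
  have hhdiff : Differentiable ℝ h := fun y => (hhd y).differentiableAt
  -- exp bound: y² ≤ a₀² → π/4 ≤ exp(-y²/2), and converse direction
  have hexp_key : ∀ y : ℝ, Real.exp (-(Real.log (4/π))) = π/4 := by
    intro y
    rw [Real.exp_neg, Real.exp_log (by positivity)]
    rw [inv_div]
  have hmono : MonotoneOn h (Icc 0 a₀) := by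
    apply monotoneOn_of_deriv_nonneg (convex_Icc _ _) hhdiff.continuous.continuousOn
      hhdiff.differentiableOn
    intro y hy
    rw [interior_Icc] at hy
    rw [(hhd y).deriv]
    have hy2 : y^2 ≤ 2 * Real.log (4/π) := by
      rw [← ha₀sq]
      exact pow_le_pow_left₀ hy.1.le hy.2.le 2
    have : Real.exp (-(Real.log (4/π))) ≤ Real.exp (-y^2/2) := by
      apply Real.exp_le_exp.2; linarith
    rw [hexp_key y] at this
    have h4 : (1:ℝ) ≤ 4/π * Real.exp (-y^2/2) := by
      calc (1:ℝ) = 4/π * (π/4) := by field_simp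
      _ ≤ 4/π * Real.exp (-y^2/2) := by
        apply mul_le_mul_of_nonneg_left this (by positivity)
    linarith
  have hanti : AntitoneOn h (Ici a₀) := by
    apply antitoneOn_of_deriv_nonpos (convex_Ici _) hhdiff.continuous.continuousOn
      hhdiff.differentiableOn
    intro y hy
    rw [interior_Ici] at hy
    rw [(hhd y).deriv]
    have hy0 : 0 ≤ y := le_trans ha₀ hy.le
    have hy2 : 2 * Real.log (4/π) ≤ y^2 := by
      rw [← ha₀sq]
      exact pow_le_pow_left₀ ha₀ hy.le 2
    have : Real.exp (-y^2/2) ≤ Real.exp (-(Real.log (4/π))) := by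
      apply Real.exp_le_exp.2; linarith
    rw [hexp_key y] at this
    have h4 : 4/π * Real.exp (-y^2/2) ≤ 1 := by
      calc 4/π * Real.exp (-y^2/2) ≤ 4/π * (π/4) :=
        mul_le_mul_of_nonneg_left this (by positivity)
      _ = 1 := by field_simp
    linarith
  have hg0 : g 0 = 0 := by simp [hgdef, EE_zero]
  have hgt : Tendsto g atTop (nhds 0) := by
    have h1 : Tendsto (fun y : ℝ => 2/π * (EE y)^2) atTop (nhds (2/π * (Real.sqrt (2*π)/2)^2)) :=
      (EE_tendsto.pow 2).const_mul _
    have h2 := h1.sub ((tendsto_const_nhds (x := (1:ℝ))).sub exp_sq_tendsto)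
    have heq : 2/π * (Real.sqrt (2*π)/2)^2 - (1 - 0) = 0 := by
      rw [div_pow, Real.sq_sqrt (by positivity)]
      field_simp
      ring
    rw [heq] at h2
    exact h2
  have key := key_nonneg ha₀ hg0 hgt hd
    (fun y hy => mul_nonneg (Real.exp_pos _).le hy)
    (fun y hy => mul_nonpos_of_nonneg_of_nonpos (Real.exp_pos _).le hy)
    (by simp [hhdef, EE_zero]) hmono hanti x hx
  simp only [hgdef] at key
  linarith

/-- Upper bound: `(2/π) (EE x)² ≤ 1 - exp(-x²)` for `x ≥ 0`. -/
lemma upper_sq {x : ℝ} (hx : 0 ≤ x) :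
    2/π * (EE x)^2 ≤ 1 - Real.exp (-x^2) := by
  set g : ℝ → ℝ := fun x => (1 - Real.exp (-x^2)) - 2/π * (EE x)^2 with hgdef
  set k : ℝ → ℝ := fun x => x * Real.exp (-x^2/2) - 2/π * EE x with hkdef
  set G : ℝ → ℝ := fun x => 2 * Real.exp (-x^2/2) * k x with hGdef
  have hπ : (0:ℝ) < π := Real.pi_pos
  have hb : (0:ℝ) < 1 - 2/π := by
    rw [sub_pos, div_lt_iff₀ hπ]
    nlinarith [Real.pi_gt_three]
  set a₀ : ℝ := Real.sqrt (1 - 2/π) with ha₀def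
  have ha₀ : 0 ≤ a₀ := Real.sqrt_nonneg _
  have ha₀sq : a₀^2 = 1 - 2/π := Real.sq_sqrt hb.le
  have hinner : ∀ y : ℝ, HasDerivAt (fun t : ℝ => -t^2/2) (-y) y := by
    intro y
    have h1 := ((hasDerivAt_pow 2 y).neg.div_const 2)
    refine h1.congr_deriv ?_
    simp; ring
  have hinner2 : ∀ y : ℝ, HasDerivAt (fun t : ℝ => -t^2) (-(2*y)) y := by
    intro y
    have h1 := (hasDerivAt_pow 2 y).neg
    refine h1.congr_deriv ?_
    simp
  have hexp : ∀ y : ℝ, HasDerivAt (fun t : ℝ => Real.exp (-t^2/2))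
      (Real.exp (-y^2/2) * (-y)) y := fun y => (hinner y).exp
  have hexp2 : ∀ y : ℝ, HasDerivAt (fun t : ℝ => Real.exp (-t^2))
      (Real.exp (-y^2) * (-(2*y))) y := fun y => (hinner2 y).exp
  have hd : ∀ y, HasDerivAt g (G y) y := by
    intro y
    have h1 : HasDerivAt g ((0 - Real.exp (-y^2) * (-(2*y))) -
        2/π * (2 * EE y ^ 1 * Real.exp (-y^2/2))) y :=
      (((hasDerivAt_const y (1:ℝ)).sub (hexp2 y))).sub (((EE_deriv y).pow 2).const_mul (2/π))
    convert h1 using 1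
    simp only [hGdef, hkdef]
    have hsq : Real.exp (-y^2) = Real.exp (-y^2/2) * Real.exp (-y^2/2) := by
      rw [← Real.exp_add]; ring_nf
    rw [hsq]
    ring
  have hkd : ∀ y, HasDerivAt k (Real.exp (-y^2/2) * (1 - 2/π - y^2)) y := by
    intro y
    have h1 : HasDerivAt k ((1 * Real.exp (-y^2/2) + y * (Real.exp (-y^2/2) * (-y))) -
        2/π * Real.exp (-y^2/2)) y :=
      ((hasDerivAt_id y).mul (hexp y)).sub ((EE_deriv y).const_mul (2/π))
    convert h1 using 1
    ring
  have hkdiff : Differentiable ℝ k := fun y => (hkd y).differentiableAt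
  have hmono : MonotoneOn k (Icc 0 a₀) := by
    apply monotoneOn_of_deriv_nonneg (convex_Icc _ _) hkdiff.continuous.continuousOn
      hkdiff.differentiableOn
    intro y hy
    rw [interior_Icc] at hy
    rw [(hkd y).deriv]
    have hy2 : y^2 ≤ 1 - 2/π := by
      rw [← ha₀sq]; exact pow_le_pow_left₀ hy.1.le hy.2.le 2
    have : 0 ≤ 1 - 2/π - y^2 := by linarith
    positivity
  have hanti : AntitoneOn k (Ici a₀) := by
    apply antitoneOn_of_deriv_nonpos (convex_Ici _) hkdiff.continuous.continuousOn
      hkdiff.differentiableOn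
    intro y hy
    rw [interior_Ici] at hy
    rw [(hkd y).deriv]
    have hy2 : 1 - 2/π ≤ y^2 := by
      rw [← ha₀sq]; exact pow_le_pow_left₀ ha₀ hy.le 2
    apply mul_nonpos_of_nonneg_of_nonpos (Real.exp_pos _).le
    linarith
  have hg0 : g 0 = 0 := by simp [hgdef, EE_zero]
  have hgt : Tendsto g atTop (nhds 0) := by
    have h1 : Tendsto (fun y : ℝ => 2/π * (EE y)^2) atTop (nhds (2/π * (Real.sqrt (2*π)/2)^2)) :=
      (EE_tendsto.pow 2).const_mul _
    have h2 := ((tendsto_const_nhds (x := (1:ℝ))).sub exp_sq_tendsto').sub h1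
    have heq : (1 - 0) - 2/π * (Real.sqrt (2*π)/2)^2 = 0 := by
      rw [div_pow, Real.sq_sqrt (by positivity)]
      field_simp
      ring
    rw [heq] at h2
    exact h2
  have key := key_nonneg ha₀ hg0 hgt hd
    (fun y hy => by
      apply mul_nonneg (by positivity) hy)
    (fun y hy => mul_nonpos_of_nonneg_of_nonpos (by positivity) hy)
    (by simp [hkdef, EE_zero]) hmono hanti x hx
  simp only [hgdef] at key
  linarith

lemma pdf_eq (t : ℝ) :
    gaussianPDFReal 0 1 t = (Real.sqrt (2*π))⁻¹ * Real.exp (-t^2/2) := by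
  simp [gaussianPDFReal]

lemma Phi_eq (x : ℝ) :
    ((gaussianReal 0 1) (Set.Iic x)).toReal = 1/2 + (Real.sqrt (2*π))⁻¹ * EE x := by
  have h1 : ((gaussianReal 0 1) (Set.Iic x)).toReal
      = ∫ t in Iic x, gaussianPDFReal 0 1 t := by
    rw [gaussianReal_apply_eq_integral 0 one_ne_zero]
    exact ENNReal.toReal_ofReal (setIntegral_nonneg measurableSet_Iic
      (fun t _ => gaussianPDFReal_nonneg 0 1 t))
  rw [h1]
  have hint : Integrable (gaussianPDFReal 0 1) := integrable_gaussianPDFReal 0 1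
  have h2 : (∫ t in Iic x, gaussianPDFReal 0 1 t) - (∫ t in Iic (0:ℝ), gaussianPDFReal 0 1 t)
      = ∫ t in (0:ℝ)..x, gaussianPDFReal 0 1 t :=
    intervalIntegral.integral_Iic_sub_Iic hint.integrableOn hint.integrableOn
  have h3 : (∫ t in Iic (0:ℝ), gaussianPDFReal 0 1 t) = 1/2 := by
    have heven : ∀ t : ℝ, gaussianPDFReal 0 1 (-t) = gaussianPDFReal 0 1 t := by
      intro t; rw [pdf_eq, pdf_eq]; ring_nf
    have hsymm : (∫ t in Iic (0:ℝ), gaussianPDFReal 0 1 t)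
        = ∫ t in Ioi (0:ℝ), gaussianPDFReal 0 1 t := by
      have h := integral_comp_neg_Ioi (c := 0) (f := gaussianPDFReal 0 1)
      simp_rw [heven, neg_zero] at h
      exact h.symm
    have htot : (∫ t in Iic (0:ℝ), gaussianPDFReal 0 1 t)
        + (∫ t in Ioi (0:ℝ), gaussianPDFReal 0 1 t) = 1 := by
      rw [← setIntegral_union (by simp [disjoint_left]) measurableSet_Ioi
        hint.integrableOn hint.integrableOn, Iic_union_Ioi]
      simpa using integral_gaussianPDFReal_eq_one 0 one_ne_zero
    linarith [hsymm ▸ htot]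
  have h4 : (∫ t in (0:ℝ)..x, gaussianPDFReal 0 1 t) = (Real.sqrt (2*π))⁻¹ * EE x := by
    rw [EE, ← intervalIntegral.integral_const_mul]
    congr 1
    ext t
    exact pdf_eq t
  linarith [h2, h4.symm ▸ h2]

/-- bounds (13.48) of Johnson–Kotz–Balakrishnan on the standard
normal CDF `Φ(x) = P[X ≤ x]`, `X ~ N(0,1)`, for `x ≥ 0`. -/
theorem stmt10 (x : ℝ) (hx : 0 ≤ x) :
    1 / 2 * (1 + Real.sqrt (1 - Real.exp (-x ^ 2 / 2)))
        ≤ ((gaussianReal 0 1) (Set.Iic x)).toReal ∧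
      ((gaussianReal 0 1) (Set.Iic x)).toReal
        ≤ 1 / 2 * (1 + Real.sqrt (1 - Real.exp (-x ^ 2))) := by
  rw [Phi_eq x]
  have hπ : (0:ℝ) < π := Real.pi_pos
  have hs : (0:ℝ) < Real.sqrt (2*π) := Real.sqrt_pos.2 (by positivity)
  have hE : 0 ≤ EE x := EE_nonneg hx
  have hc : (2 * (Real.sqrt (2*π))⁻¹ * EE x)^2 = 2/π * (EE x)^2 := by
    rw [mul_pow, mul_pow]
    rw [← Real.sqrt_inv, Real.sq_sqrt (by positivity)]
    field_simp
  have hcE : 0 ≤ 2 * (Real.sqrt (2*π))⁻¹ * EE x := by positivity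
  constructor
  · -- lower bound
    have h1 : Real.sqrt (1 - Real.exp (-x^2/2)) ≤ 2 * (Real.sqrt (2*π))⁻¹ * EE x := by
      have := lower_sq hx
      calc Real.sqrt (1 - Real.exp (-x^2/2)) ≤ Real.sqrt ((2 * (Real.sqrt (2*π))⁻¹ * EE x)^2) := by
            apply Real.sqrt_le_sqrt
            rw [hc]
            exact this
      _ = 2 * (Real.sqrt (2*π))⁻¹ * EE x := Real.sqrt_sq hcE
    linarith
  · -- upper bound
    have h1 : 2 * (Real.sqrt (2*π))⁻¹ * EE x ≤ Real.sqrt (1 - Real.exp (-x^2)) :=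
      Real.le_sqrt_of_sq_le (by rw [hc]; exact upper_sq hx)
    linarith
end

section
/- Fix β ∈ [0,1) and N ≥ 2 a natural number. For x > 0, let μ₁(x) and μ_N(x) be the unique positive solutions of x + β − (1−β)μ = β^{μ+1} and x/N + β − (1−β)μ = β^{μ+1}, respectively. Then for every x > 0, μ₁(x)·(μ₁(x)+1) > N·μ_N(x)·(μ_N(x)+1). -/
open Real Set

-- generic derivative helper: a ↦ exp(-a)*(c1 + c2*a) + c3*a + c4*a^2 + c5*a^3
lemma hderiv_aux (c0 c1 c2 c3 c4 c5 b : ℝ) :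
    HasDerivAt (fun a : ℝ => Real.exp (-a) * (c1 + c2*a) + c0 + c3*a + c4*a^2 + c5*a^3)
      (Real.exp (-b) * (c2 - c1 - c2*b) + c3 + c4*(2*b) + c5*(3*b^2)) b := by
  have h1 : HasDerivAt (fun a : ℝ => Real.exp (-a)) (-Real.exp (-b)) b := by
    simpa [Function.comp_def] using (Real.hasDerivAt_exp (-b)).comp b ((hasDerivAt_id b).neg)
  have h2 : HasDerivAt (fun a : ℝ => c1 + c2*a) c2 b := by
    simpa using ((hasDerivAt_id b).const_mul c2).const_add c1
  have h3 := h1.mul h2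
  have h4 : HasDerivAt (fun a : ℝ => c3*a) c3 b := by
    simpa using (hasDerivAt_id b).const_mul c3
  have h3' : HasDerivAt (fun a : ℝ => Real.exp (-a) * (c1 + c2*a) + c0)
      (-Real.exp (-b) * (c1 + c2*b) + Real.exp (-b) * c2) b := h3.add_const c0
  have h5 : HasDerivAt (fun a : ℝ => c4*a^2) (c4*(2*b)) b := by
    simpa using (hasDerivAt_pow 2 b).const_mul c4
  have h6 : HasDerivAt (fun a : ℝ => c5*a^3) (c5*(3*b^2)) b := by
    simpa using (hasDerivAt_pow 3 b).const_mul c5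
  have := ((h3'.add h4).add h5).add h6
  exact this.congr_deriv (by ring)

lemma r2pos (m a : ℝ) (hm : 0 < m) (ha : 0 < a) :
    0 < Real.exp (-a) * (-(1:ℝ) + (m+1)*a) + 1 + (1/m)*a := by
  rcases le_or_gt 1 ((m+1)*a) with h | h
  · have h1 : 0 ≤ Real.exp (-a) * (-(1:ℝ) + (m+1)*a) :=
      mul_nonneg (Real.exp_pos _).le (by linarith)
    have : 0 < (1/m)*a := by positivity
    linarith
  · have he : Real.exp (-a) ≤ 1 := by
      rw [Real.exp_le_one_iff]; linarith
    have h2 : -(1:ℝ) + (m+1)*a ≤ Real.exp (-a) * (-(1:ℝ) + (m+1)*a) := by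
      nlinarith [Real.exp_pos (-a)]
    have h3 : 0 < (m+1)*a := by positivity
    have : 0 < (1/m)*a := by positivity
    linarith

lemma r1pos (m a : ℝ) (hm : 0 < m) (ha : 0 < a) :
    0 < Real.exp (-a) * (-m + (-(m+1))*a) + m + 1*a + (1/(2*m))*a^2 := by
  set r1 : ℝ → ℝ := fun a => Real.exp (-a) * (-m + (-(m+1))*a) + m + 1*a + (1/(2*m))*a^2 + 0*a^3
    with hr1def
  have hd : ∀ b : ℝ, HasDerivAt r1
      (Real.exp (-b) * (-(1:ℝ) + (m+1)*b) + 1 + (1/m)*b) b := by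
    intro b
    have := hderiv_aux m (-m) (-(m+1)) 1 (1/(2*m)) 0 b
    have e2 : Real.exp (-b) * (-(m+1) - -m - -(m+1)*b) + 1 + 1/(2*m)*(2*b) + 0*(3*b^2)
        = Real.exp (-b) * (-(1:ℝ) + (m+1)*b) + 1 + (1/m)*b := by
      field_simp
      ring
    rw [e2] at this
    exact this
  have hmono : StrictMonoOn r1 (Ici 0) := by
    apply strictMonoOn_of_deriv_pos (convex_Ici 0)
    · exact fun b _ => (hd b).continuousAt.continuousWithinAt
    · intro b hb
      rw [interior_Ici] at hb
      rw [(hd b).deriv]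
      exact r2pos m b hm hb
  have h0 : r1 0 = 0 := by simp [hr1def]
  have := hmono (le_refl (0:ℝ)) (le_of_lt ha) ha
  rw [h0] at this
  simpa [hr1def] using this

lemma rpos (m a : ℝ) (hm : 0 < m) (ha : 0 < a) :
    0 < Real.exp (-a) * ((2*m+1) + (m+1)*a) + m*a + (1/2)*a^2 + (1/(6*m))*a^3 - (2*m+1) := by
  set r : ℝ → ℝ := fun a => Real.exp (-a) * ((2*m+1) + (m+1)*a) + 0 + m*a + (1/2)*a^2 + (1/(6*m))*a^3
    with hrdef
  have hd : ∀ b : ℝ, HasDerivAt r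
      (Real.exp (-b) * (-m + (-(m+1))*b) + m + 1*b + (1/(2*m))*b^2) b := by
    intro b
    have := hderiv_aux 0 (2*m+1) (m+1) m (1/2) (1/(6*m)) b
    have e2 : Real.exp (-b) * ((m+1) - (2*m+1) - (m+1)*b) + m + 1/2*(2*b) + 1/(6*m)*(3*b^2)
        = Real.exp (-b) * (-m + (-(m+1))*b) + m + 1*b + (1/(2*m))*b^2 := by
      field_simp
      ring
    rw [e2] at this
    exact this
  have hmono : StrictMonoOn r (Ici 0) := by
    apply strictMonoOn_of_deriv_pos (convex_Ici 0)
    · exact fun b _ => (hd b).continuousAt.continuousWithinAt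
    · intro b hb
      rw [interior_Ici] at hb
      rw [(hd b).deriv]
      exact r1pos m b hm hb
  have h0 : r 0 = 2*m+1 := by simp [hrdef]
  have := hmono (le_refl (0:ℝ)) (le_of_lt ha) ha
  rw [h0] at this
  simp only [hrdef] at this
  linarith

lemma Ppos (β m : ℝ) (hβ0 : 0 < β) (hβ1 : β < 1) (hm : 0 < m) :
    0 < β^(m+1) * ((2*m+1) - m*(m+1)*Real.log β) + (1-β)*m^2 - (2*m+1)*β := by
  have hL : Real.log β < 0 := Real.log_neg hβ0 hβ1
  set s : ℝ := -Real.log β with hsdef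
  have hs : 0 < s := by simp [hsdef]; linarith
  clear_value s
  have hβE : β = Real.exp (-s) := by
    rw [hsdef, neg_neg, Real.exp_log hβ0]
  have hpow : β ^ (m+1) = Real.exp (-s) * Real.exp (-(m*s)) := by
    rw [Real.rpow_def_of_pos hβ0, ← Real.exp_add]
    congr 1
    rw [hsdef]; ring
  have hcub : 1 + s + s^2/2 + s^3/6 ≤ Real.exp s := by
    have := Real.sum_le_exp_of_nonneg hs.le 4
    rw [Finset.sum_range_succ, Finset.sum_range_succ, Finset.sum_range_succ,
      Finset.sum_range_one] at this
    norm_num [Nat.factorial] at this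
    linarith
  have key := rpos m (m*s) hm (by positivity)
  have e : m*(m*s) + (1/2)*(m*s)^2 + (1/(6*m))*(m*s)^3 = m^2*s + m^2*s^2/2 + m^2*s^3/6 := by
    field_simp
  have h2 : m^2*(1+s+s^2/2+s^3/6) ≤ m^2 * Real.exp s :=
    mul_le_mul_of_nonneg_left hcub (sq_nonneg m)
  have key' : 0 < Real.exp (-(m*s)) * ((2*m+1) + (m+1)*(m*s))
      + (m^2*s + m^2*s^2/2 + m^2*s^3/6) - (2*m+1) := by linarith [key, e]
  have h1 : 0 < Real.exp (-(m*s)) * ((2*m+1) + (m+1)*(m*s))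
      + (Real.exp s - 1)*m^2 - (2*m+1) := by
    have h2' : m^2*s + m^2*s^2/2 + m^2*s^3/6 ≤ (Real.exp s - 1)*m^2 := by nlinarith [h2]
    linarith [key', h2']
  have hE1 : Real.exp (-s) * Real.exp s = 1 := by rw [← Real.exp_add]; simp
  have hfin : β^(m+1) * ((2*m+1) - m*(m+1)*Real.log β) + (1-β)*m^2 - (2*m+1)*β
      = Real.exp (-s) * (Real.exp (-(m*s)) * ((2*m+1) + (m+1)*(m*s))
          + (Real.exp s - 1)*m^2 - (2*m+1)) := by
    rw [hpow]
    rw [show Real.log β = -s from by rw [hsdef]; ring]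
    rw [hβE]
    linear_combination (-(m^2)) * hE1
  rw [hfin]
  exact mul_pos (Real.exp_pos _) h1

lemma cpos (β : ℝ) (hβ0 : 0 < β) (hβ1 : β < 1) : 0 < β*Real.log β + 1 - β := by
  have hL : Real.log β < 0 := Real.log_neg hβ0 hβ1
  have h := Real.add_one_lt_exp (x := -Real.log β) (by linarith)
  rw [Real.exp_neg, Real.exp_log hβ0] at h
  have h2 : β * (-Real.log β + 1) < β * β⁻¹ := mul_lt_mul_of_pos_left h hβ0
  rw [mul_inv_cancel₀ (ne_of_gt hβ0)] at h2
  nlinarith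

lemma fmono (β : ℝ) (hβ0 : 0 < β) (hβ1 : β < 1) {a b : ℝ} (ha : 0 ≤ a) (hab : a < b) :
    β^(a+1) - β + (1-β)*a < β^(b+1) - β + (1-β)*b := by
  have hL : Real.log β < 0 := Real.log_neg hβ0 hβ1
  have h1 : β^(b+1) = β^(a+1) * β^(b-a) := by
    rw [← Real.rpow_add hβ0]; ring_nf
  have h2 : Real.log β * (b-a) + 1 ≤ β^(b-a) := by
    rw [Real.rpow_def_of_pos hβ0]
    exact Real.add_one_le_exp _
  have h3 : β^(b-a) - 1 ≤ 0 := by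
    have : β^(b-a) ≤ 1 := Real.rpow_le_one hβ0.le hβ1.le (by linarith)
    linarith
  have h4 : β^(a+1) ≤ β := by
    calc β^(a+1) ≤ β^(1:ℝ) := Real.rpow_le_rpow_of_exponent_ge hβ0 hβ1.le (by linarith)
    _ = β := Real.rpow_one β
  have h5 : β * (β^(b-a) - 1) ≤ β^(a+1) * (β^(b-a) - 1) :=
    mul_le_mul_of_nonpos_right h4 h3
  have h6 : β * (Real.log β * (b-a)) ≤ β * (β^(b-a) - 1) :=
    mul_le_mul_of_nonneg_left (by linarith) hβ0.le
  have hc := cpos β hβ0 hβ1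
  have h7 : 0 < (b-a) * (β*Real.log β + 1 - β) := mul_pos (by linarith) hc
  nlinarith [h1, h5, h6, h7]

lemma fpos (β : ℝ) (hβ0 : 0 < β) (hβ1 : β < 1) {m : ℝ} (hm : 0 < m) :
    0 < β^(m+1) - β + (1-β)*m := by
  have := fmono β hβ0 hβ1 (le_refl 0) hm
  simpa [Real.rpow_one] using this

lemma hmono (β : ℝ) (hβ0 : 0 < β) (hβ1 : β < 1) {a b : ℝ} (ha : 0 < a) (hab : a < b) :
    a*(a+1) / (β^(a+1) - β + (1-β)*a) < b*(b+1) / (β^(b+1) - β + (1-β)*b) := by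
  set L := Real.log β with hLdef
  set f : ℝ → ℝ := fun μ => Real.exp (L*(μ+1)) - β + (1-β)*μ with hfdef
  set h : ℝ → ℝ := fun μ => μ*(μ+1) / f μ with hhdef
  have hrw : ∀ μ : ℝ, β^(μ+1) = Real.exp (L*(μ+1)) := fun μ =>
    Real.rpow_def_of_pos hβ0 (μ+1)
  have hfp : ∀ μ : ℝ, 0 < μ → 0 < f μ := by
    intro μ hμ
    have := fpos β hβ0 hβ1 hμ
    rw [hrw μ] at this
    exact this
  have hdf : ∀ μ : ℝ, HasDerivAt f (L * Real.exp (L*(μ+1)) + (1-β)) μ := by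
    intro μ
    have h1 : HasDerivAt (fun x : ℝ => L*(x+1)) L μ := by
      simpa using ((hasDerivAt_id μ).add_const 1).const_mul L
    have h2 : HasDerivAt (fun x : ℝ => Real.exp (L*(x+1))) (Real.exp (L*(μ+1)) * L) μ :=
      h1.exp
    have h3 : HasDerivAt (fun x : ℝ => (1-β)*x) (1-β) μ := by
      simpa using (hasDerivAt_id μ).const_mul (1-β)
    have := (h2.sub_const β).add h3
    exact this.congr_deriv (by ring)
  have hdg : ∀ μ : ℝ, HasDerivAt (fun x : ℝ => x*(x+1)) (2*μ+1) μ := by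
    intro μ
    have := (hasDerivAt_id μ).mul ((hasDerivAt_id μ).add_const 1)
    exact this.congr_deriv (by simp only [id]; ring)
  have hmono : StrictMonoOn h (Ioi 0) := by
    apply strictMonoOn_of_deriv_pos (convex_Ioi 0)
    · intro μ hμ
      exact (((hdg μ).div (hdf μ) (ne_of_gt (hfp μ hμ))).continuousAt).continuousWithinAt
    · intro μ hμ
      rw [interior_Ioi] at hμ
      have hfne := ne_of_gt (hfp μ hμ)
      rw [show deriv h μ = _ from ((hdg μ).div (hdf μ) hfne).deriv]
      apply div_pos
      · have hP := Ppos β μ hβ0 hβ1 hμ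
        rw [hrw μ] at hP
        have : (2*μ+1) * f μ - μ*(μ+1) * (L * Real.exp (L*(μ+1)) + (1-β))
            = Real.exp (L*(μ+1)) * ((2*μ+1) - μ*(μ+1)*L) + (1-β)*μ^2 - (2*μ+1)*β := by
          simp only [hfdef]; ring
        linarith [this ▸ hP]
      · positivity
  have := hmono (mem_Ioi.2 ha) (mem_Ioi.2 (lt_trans ha hab)) hab
  simp only [hhdef, hfdef] at this
  rw [hrw a, hrw b]
  exact this

/-- with `β ∈ [0,1)` and `N ≥ 2`, the positive roots `μ₁, μ_N` of
`x + β − (1−β)μ = β^{μ+1}` and `x/N + β − (1−β)μ = β^{μ+1}` satisfy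
`μ₁(μ₁+1) > N·μ_N(μ_N+1)` for every `x > 0`. -/
theorem stmt13 (β : ℝ) (hβ0 : 0 ≤ β) (hβ1 : β < 1) (N : ℕ) (hN : 2 ≤ N) :
    ∀ x > (0:ℝ), ∀ μ1 μN : ℝ,
      0 < μ1 → x + β - (1 - β) * μ1 = β ^ (μ1 + 1) →
      0 < μN → x / N + β - (1 - β) * μN = β ^ (μN + 1) →
      N * μN * (μN + 1) < μ1 * (μ1 + 1) := by
  intro x hx μ1 μN hμ1 heq1 hμN heqN
  have hN2 : (2:ℝ) ≤ (N:ℝ) := by exact_mod_cast hN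
  have hNpos : (0:ℝ) < (N:ℝ) := by linarith
  rcases eq_or_lt_of_le hβ0 with hb | hb
  · -- β = 0
    subst hb
    rw [Real.zero_rpow (by positivity : μ1 + 1 ≠ 0)] at heq1
    rw [Real.zero_rpow (by positivity : μN + 1 ≠ 0)] at heqN
    have h1 : μ1 = x := by linarith
    have h2 : (N:ℝ) * μN = x := by
      have : μN = x / N := by linarith
      rw [this]; field_simp
    have h3 : μN < μ1 := by
      have : μN = x / N := by linarith
      rw [this, h1]
      exact div_lt_self hx (by linarith)
    rw [h2, h1]
    have := mul_lt_mul_of_pos_left (by linarith : μN + 1 < x + 1) hx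
    linarith
  · -- 0 < β
    have hfa : 0 < β^(μN+1) - β + (1-β)*μN := fpos β hb hβ1 hμN
    have hfb : 0 < β^(μ1+1) - β + (1-β)*μ1 := fpos β hb hβ1 hμ1
    have hvb : β^(μ1+1) - β + (1-β)*μ1 = x := by linarith
    have hva : β^(μN+1) - β + (1-β)*μN = x / N := by linarith
    have hxN : 0 < x / N := by positivity
    have hlt : μN < μ1 := by
      by_contra hcon
      push_neg at hcon
      have hxNx : x / N < x := div_lt_self hx (by linarith)
      rcases eq_or_lt_of_le hcon with he | hl
      · rw [he] at hvb
        rw [hvb] at hva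
        linarith
      · have := fmono β hb hβ1 hμ1.le hl
        rw [hva, hvb] at this
        linarith
    have hdiv := hmono β hb hβ1 hμN hlt
    rw [div_lt_div_iff₀ hfa hfb] at hdiv
    rw [hva, hvb] at hdiv
    have hxeq : x = (N:ℝ) * (x / N) := by field_simp
    have key : μN*(μN+1)*((N:ℝ)*(x/N)) < μ1*(μ1+1)*(x/N) := by
      rw [← hxeq]; exact hdiv
    have h9 : ((N:ℝ) * μN * (μN + 1)) * (x/N) < (μ1 * (μ1 + 1)) * (x/N) := by
      linarith [key]
    exact lt_of_mul_lt_mul_right h9 hxN.le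
end

section
/- Let β ∈ (0,1), N ≥ 2, and for x > 0 let μ₁(x), μ_N(x) be the unique positive roots of x + β − (1−β)μ = β^{μ+1} and x/N + β − (1−β)μ = β^{μ+1}. Define q(x) = β·(1 + 1/μ_N(x))/(1 + 1/μ₁(x)). Then q(x) → β as x → ∞ and q(x) → βN as x → 0⁺. -/
open Filter Topology

-- exp t ≤ 1 + t + t²/2 for t ≤ 0
lemma exp_le_quad {t : ℝ} (ht : t ≤ 0) : Real.exp t ≤ 1 + t + t ^ 2 / 2 := by
  have h := Real.quadratic_le_exp_of_nonneg (neg_nonneg.mpr ht)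
  have hpos : 0 < 1 + -t + (-t) ^ 2 / 2 := by nlinarith
  have h2 : Real.exp t = 1 / Real.exp (-t) := by
    rw [Real.exp_neg]; field_simp
  rw [h2, div_le_iff₀ (Real.exp_pos _)]
  nlinarith [mul_le_mul_of_nonneg_left h (show (0:ℝ) ≤ 1 + t + t ^ 2 / 2 by nlinarith [sq_nonneg (t+1)]), sq_nonneg (t ^ 2)]


lemma ratio_bounds (N c D K x m1 mN : ℝ) (hc : 0 < c) (hKpos : 0 < K)
    (hKD : D = K * c ^ 2) (hNR : 2 ≤ N) (hx0 : 0 < x) (hKx : K * x < 1 / 2)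
    (hm1 : 0 < m1) (hmN : 0 < mN)
    (f1 : c * m1 ≤ x) (f2 : x ≤ c * m1 + D * m1 ^ 2)
    (f3 : N * (c * mN) ≤ x) (f4 : x ≤ N * (c * mN) + N * (D * mN ^ 2)) :
    N * (1 - K * x) ≤ m1 / mN ∧ m1 / mN ≤ N ^ 2 / (N - K * x) := by
  subst hKD
  have hNpos : 0 < N := by linarith
  have hsq1 : (c * m1) ^ 2 ≤ x ^ 2 := by nlinarith [mul_pos hc hm1]
  have hsqN : (N * (c * mN)) ^ 2 ≤ x ^ 2 := by
    nlinarith [mul_pos hNpos (mul_pos hc hmN)]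
  have hf2' : x - K * x ^ 2 ≤ c * m1 := by nlinarith
  have hfN' : N * x ≤ N ^ 2 * (c * mN) + K * x ^ 2 := by
    nlinarith [mul_le_mul_of_nonneg_left hsqN hKpos.le,
      mul_le_mul_of_nonneg_left f4 hNpos.le]
  have h1Kx : (0:ℝ) < 1 - K * x := by linarith
  have hden : 0 < N - K * x := by linarith
  constructor
  · rw [le_div_iff₀ hmN]
    nlinarith [mul_le_mul_of_nonneg_left f3 h1Kx.le, mul_pos hc hmN]
  · rw [div_le_div_iff₀ hmN hden]
    nlinarith [mul_le_mul_of_nonneg_right f1 hden.le, mul_pos hc hm1]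

/-- with `q(x) = β(1 + 1/μ_N(x))/(1 + 1/μ₁(x))`, one has `q(x) → β`
as `x → ∞` and `q(x) → βN` as `x → 0⁺`. -/
theorem stmt18 (β : ℝ) (hβ : β ∈ Set.Ioo (0:ℝ) 1) (N : ℕ) (hN : 2 ≤ N)
    (μ1 μN : ℝ → ℝ)
    (h1 : ∀ x > (0:ℝ), 0 < μ1 x ∧ x + β - (1 - β) * μ1 x = β ^ (μ1 x + 1))
    (hNr : ∀ x > (0:ℝ), 0 < μN x ∧ x / N + β - (1 - β) * μN x = β ^ (μN x + 1)) :
    Tendsto (fun x => β * (1 + 1 / μN x) / (1 + 1 / μ1 x)) atTop (𝓝 β) ∧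
      Tendsto (fun x => β * (1 + 1 / μN x) / (1 + 1 / μ1 x)) (𝓝[>] (0:ℝ))
        (𝓝 (β * N)) := by
  obtain ⟨hβ0, hβ1⟩ := hβ
  have hNR : (2:ℝ) ≤ (N:ℝ) := by exact_mod_cast hN
  have hNpos : (0:ℝ) < (N:ℝ) := by linarith
  have hlog : Real.log β < 0 := Real.log_neg hβ0 hβ1
  -- c > 0
  set c : ℝ := 1 - β + β * Real.log β with hc_def
  have hc : 0 < c := by
    have h := Real.log_lt_sub_one_of_pos (x := β⁻¹) (by positivity) (by
      intro h; rw [inv_eq_one] at h; linarith)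
    rw [Real.log_inv] at h
    have : -Real.log β < β⁻¹ - 1 := h
    have h2 : β * (-Real.log β) < β * (β⁻¹ - 1) := by
      exact (mul_lt_mul_iff_right₀ hβ0).mpr this
    rw [mul_sub, mul_inv_cancel₀ (ne_of_gt hβ0)] at h2
    simp only [hc_def]; nlinarith
  set D : ℝ := β * (Real.log β) ^ 2 / 2 with hD_def
  have hD : 0 < D := by
    have : Real.log β ≠ 0 := ne_of_lt hlog
    positivity
  clear_value c D
  -- key bracket: for μ ≥ 0, c μ ≤ g(μ) ≤ c μ + D μ²
  have hrpow : ∀ μ : ℝ, β ^ (μ + 1) = β * Real.exp (μ * Real.log β) := by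
    intro μ
    rw [Real.rpow_def_of_pos hβ0, mul_add, mul_one, Real.exp_add, Real.exp_log hβ0,
      mul_comm (Real.log β) μ, mul_comm]
  have key : ∀ μ : ℝ, 0 ≤ μ →
      c * μ ≤ β ^ (μ + 1) + (1 - β) * μ - β ∧
      β ^ (μ + 1) + (1 - β) * μ - β ≤ c * μ + D * μ ^ 2 := by
    intro μ hμ
    have ht : μ * Real.log β ≤ 0 := mul_nonpos_of_nonneg_of_nonpos hμ hlog.le
    have hlo := Real.add_one_le_exp (μ * Real.log β)
    have hhi := exp_le_quad ht
    rw [hrpow]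
    constructor
    · nlinarith [mul_le_mul_of_nonneg_left hlo hβ0.le]
    · nlinarith [mul_le_mul_of_nonneg_left hhi hβ0.le]
  -- bounds on μ1, μN
  have heq1 : ∀ x > (0:ℝ), x = β ^ (μ1 x + 1) + (1 - β) * μ1 x - β := by
    intro x hx; have := (h1 x hx).2; linarith
  have heqN : ∀ x > (0:ℝ), x / N = β ^ (μN x + 1) + (1 - β) * μN x - β := by
    intro x hx; have := (hNr x hx).2; linarith
  have hb1 : ∀ x > (0:ℝ), c * μ1 x ≤ x ∧ x ≤ c * μ1 x + D * (μ1 x) ^ 2 := by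
    intro x hx
    have := key (μ1 x) (h1 x hx).1.le
    rw [← heq1 x hx] at this; exact this
  have hbN : ∀ x > (0:ℝ), c * μN x ≤ x / N ∧ x / N ≤ c * μN x + D * (μN x) ^ 2 := by
    intro x hx
    have := key (μN x) (hNr x hx).1.le
    rw [← heqN x hx] at this; exact this
  -- simple lower bounds for atTop : μ ≥ x/(1-β)
  have hsimple : ∀ μ : ℝ, 0 ≤ μ → β ^ (μ + 1) ≤ β := by
    intro μ hμ
    calc β ^ (μ + 1) ≤ β ^ (1:ℝ) :=
          Real.rpow_le_rpow_of_exponent_ge hβ0 hβ1.le (by linarith)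
      _ = β := Real.rpow_one β
  have hμ1_ge : ∀ x > (0:ℝ), x / (1 - β) ≤ μ1 x := by
    intro x hx
    have h := heq1 x hx
    have h2 := hsimple (μ1 x) (h1 x hx).1.le
    rw [div_le_iff₀ (by linarith)]; linarith
  have hμN_ge : ∀ x > (0:ℝ), x / N / (1 - β) ≤ μN x := by
    intro x hx
    have h := heqN x hx
    have h2 := hsimple (μN x) (hNr x hx).1.le
    rw [div_le_iff₀ (by linarith)]; linarith
  -- Part 1
  have hinv1 : Tendsto (fun x => 1 / μ1 x) atTop (𝓝 0) := by
    apply tendsto_of_tendsto_of_tendsto_of_le_of_le'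
      (tendsto_const_nhds : Tendsto (fun _ : ℝ => (0:ℝ)) atTop (𝓝 0))
      (tendsto_const_nhds.div_atTop tendsto_id : Tendsto (fun x : ℝ => (1-β)/x) atTop (𝓝 0))
    · filter_upwards [eventually_gt_atTop (0:ℝ)] with x hx
      have := (h1 x hx).1; positivity
    · filter_upwards [eventually_gt_atTop (0:ℝ)] with x hx
      have h := hμ1_ge x hx
      have hb : 0 < 1 - β := by linarith
      have hpos : 0 < x / (1 - β) := by positivity
      have := one_div_le_one_div_of_le hpos h
      calc 1 / μ1 x ≤ 1 / (x / (1-β)) := this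
        _ = (1-β)/x := by field_simp
  have hinvN : Tendsto (fun x => 1 / μN x) atTop (𝓝 0) := by
    apply tendsto_of_tendsto_of_tendsto_of_le_of_le'
      (tendsto_const_nhds : Tendsto (fun _ : ℝ => (0:ℝ)) atTop (𝓝 0))
      (tendsto_const_nhds.div_atTop tendsto_id : Tendsto (fun x : ℝ => ((N:ℝ)*(1-β))/x) atTop (𝓝 0))
    · filter_upwards [eventually_gt_atTop (0:ℝ)] with x hx
      have := (hNr x hx).1; positivity
    · filter_upwards [eventually_gt_atTop (0:ℝ)] with x hx
      have h := hμN_ge x hx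
      have hb : 0 < 1 - β := by linarith
      have hpos : 0 < x / N / (1 - β) := by positivity
      have := one_div_le_one_div_of_le hpos h
      calc 1 / μN x ≤ 1 / (x / N / (1-β)) := this
        _ = ((N:ℝ)*(1-β))/x := by
            rw [div_div, one_div_div]
  have part1 : Tendsto (fun x => β * (1 + 1 / μN x) / (1 + 1 / μ1 x)) atTop (𝓝 β) := by
    have hthis : Tendsto (fun x => β * (1 + 1 / μN x) / (1 + 1 / μ1 x)) atTop
        (𝓝 (β * (1 + 0) / (1 + 0))) :=
      Tendsto.div (tendsto_const_nhds.mul (tendsto_const_nhds.add hinvN))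
        (tendsto_const_nhds.add hinv1) (by norm_num)
    have heq : β * (1 + 0) / (1 + 0) = β := by norm_num
    rw [heq] at hthis; exact hthis
  refine ⟨part1, ?_⟩
  -- Part 2
  obtain ⟨K, hKpos, hKD⟩ : ∃ K : ℝ, 0 < K ∧ D = K * c ^ 2 :=
    ⟨D / c ^ 2, by positivity, by field_simp⟩
  -- upper bounds on μ1, μN
  have hμ1_le : ∀ x > (0:ℝ), c * μ1 x ≤ x := fun x hx => (hb1 x hx).1
  have hμN_le : ∀ x > (0:ℝ), (N:ℝ) * (c * μN x) ≤ x := by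
    intro x hx
    have h := (hbN x hx).1
    have := (mul_le_mul_iff_right₀ hNpos).mpr h
    calc (N:ℝ) * (c * μN x) ≤ (N:ℝ) * (x / N) := this
      _ = x := by field_simp
  -- μ1 → 0 and μN → 0 at 0+
  have hxc : Tendsto (fun x : ℝ => x / c) (𝓝[>] (0:ℝ)) (𝓝 0) := by
    have h := ((continuous_id.div_const c).tendsto 0).mono_left
      (nhdsWithin_le_nhds (s := Set.Ioi (0:ℝ)))
    simpa using h
  have hμ10 : Tendsto μ1 (𝓝[>] (0:ℝ)) (𝓝 0) := by
    apply tendsto_of_tendsto_of_tendsto_of_le_of_le'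
      (tendsto_const_nhds : Tendsto (fun _ : ℝ => (0:ℝ)) (𝓝[>] (0:ℝ)) (𝓝 0)) hxc
    · filter_upwards [self_mem_nhdsWithin] with x hx
      exact (h1 x hx).1.le
    · filter_upwards [self_mem_nhdsWithin] with x hx
      exact (le_div_iff₀' hc).mpr (hμ1_le x hx)
  have hμN0 : Tendsto μN (𝓝[>] (0:ℝ)) (𝓝 0) := by
    apply tendsto_of_tendsto_of_tendsto_of_le_of_le'
      (tendsto_const_nhds : Tendsto (fun _ : ℝ => (0:ℝ)) (𝓝[>] (0:ℝ)) (𝓝 0)) hxc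
    · filter_upwards [self_mem_nhdsWithin] with x hx
      exact (hNr x hx).1.le
    · filter_upwards [self_mem_nhdsWithin] with x hx
      have h := hμN_le x hx
      rw [le_div_iff₀' hc]
      nlinarith [mul_pos hc (hNr x hx).1,
        mul_le_mul_of_nonneg_right hNR (mul_pos hc (hNr x hx).1).le]
  -- the ratio μ1/μN tends to N
  set δ : ℝ := 1 / (2 * K) with hδ_def
  have hδpos : 0 < δ := by rw [hδ_def]; positivity
  have hev : ∀ᶠ x in 𝓝[>] (0:ℝ),
      (N:ℝ) * (1 - K * x) ≤ μ1 x / μN x ∧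
      μ1 x / μN x ≤ (N:ℝ) ^ 2 / ((N:ℝ) - K * x) := by
    filter_upwards [Ioo_mem_nhdsGT_of_mem (Set.left_mem_Ico.mpr hδpos)] with x hx
    obtain ⟨hx0, hxδ⟩ := hx
    have hKx : K * x < 1 / 2 := by
      have h2K : (0:ℝ) < 2 * K := by positivity
      rw [hδ_def, lt_div_iff₀ h2K] at hxδ
      nlinarith
    have hμ1pos := (h1 x hx0).1
    have hμNpos := (hNr x hx0).1
    have f4 : x ≤ (N:ℝ) * (c * μN x) + (N:ℝ) * (D * μN x ^ 2) := by
      have h := (hbN x hx0).2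
      rw [div_le_iff₀ hNpos] at h
      nlinarith
    exact ratio_bounds (N:ℝ) c D K x (μ1 x) (μN x) hc hKpos hKD hNR hx0 hKx
      hμ1pos hμNpos (hb1 x hx0).1 (hb1 x hx0).2 (hμN_le x hx0) f4
  have hL : Tendsto (fun x : ℝ => (N:ℝ) * (1 - K * x)) (𝓝[>] (0:ℝ)) (𝓝 (N:ℝ)) := by
    have h : Tendsto (fun x : ℝ => (N:ℝ) * (1 - K * x)) (𝓝 0) (𝓝 ((N:ℝ) * (1 - K * 0))) :=
      tendsto_const_nhds.mul (tendsto_const_nhds.sub (tendsto_const_nhds.mul tendsto_id))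
    simpa using h.mono_left nhdsWithin_le_nhds
  have hU : Tendsto (fun x : ℝ => (N:ℝ) ^ 2 / ((N:ℝ) - K * x)) (𝓝[>] (0:ℝ)) (𝓝 (N:ℝ)) := by
    have h2 : Tendsto (fun x : ℝ => ((N:ℝ) - K * x)) (𝓝 0) (𝓝 ((N:ℝ) - K * 0)) :=
      tendsto_const_nhds.sub (tendsto_const_nhds.mul tendsto_id)
    have h3 := Tendsto.div (tendsto_const_nhds : Tendsto (fun _ : ℝ => (N:ℝ)^2) (𝓝 0) (𝓝 ((N:ℝ)^2)))
      h2 (by simpa using hNpos.ne')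
    have h4 : (N:ℝ)^2 / ((N:ℝ) - K * 0) = (N:ℝ) := by
      rw [mul_zero, sub_zero]; field_simp
    rw [h4] at h3
    exact h3.mono_left nhdsWithin_le_nhds
  have hratio : Tendsto (fun x => μ1 x / μN x) (𝓝[>] (0:ℝ)) (𝓝 (N:ℝ)) :=
    tendsto_of_tendsto_of_tendsto_of_le_of_le' hL hU
      (hev.mono fun x h => h.1) (hev.mono fun x h => h.2)
  -- combine
  have hfinal : Tendsto (fun x => β * (μ1 x / μN x) * ((μN x + 1) / (μ1 x + 1)))
      (𝓝[>] (0:ℝ)) (𝓝 (β * (N:ℝ) * ((0 + 1) / (0 + 1)))) :=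
    (tendsto_const_nhds.mul hratio).mul
      ((hμN0.add tendsto_const_nhds).div (hμ10.add tendsto_const_nhds) (by norm_num))
  have heqv : (fun x => β * (1 + 1 / μN x) / (1 + 1 / μ1 x)) =ᶠ[𝓝[>] (0:ℝ)]
      (fun x => β * (μ1 x / μN x) * ((μN x + 1) / (μ1 x + 1))) := by
    filter_upwards [self_mem_nhdsWithin] with x hx
    have hμ1pos := (h1 x hx).1
    have hμNpos := (hNr x hx).1
    have a1 : μ1 x ≠ 0 := ne_of_gt hμ1pos
    have aN : μN x ≠ 0 := ne_of_gt hμNpos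
    have b1 : μ1 x + 1 ≠ 0 := by positivity
    have bN : μN x + 1 ≠ 0 := by positivity
    have d1 : 1 + 1 / μ1 x ≠ 0 := by positivity
    field_simp
  have := (Tendsto.congr' heqv.symm hfinal)
  simpa using this
end
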